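/- Let f, g be real analytic on 𝕋 with f and v = g/f nonconstant and Z(f) = {x ∈ 𝕋 : f(x) = 0} ≠ ∅. Then there is a constant c = c(f,g) > 0 such that mes{x ∈ 𝕋 : |g(x) − E·f(x)| < ε} < ε^{c} for all E ∈ ℝ and all sufficiently small ε > 0. -/

import Mathlib

open MeasureTheory Set


lemma diam_small {F : ℝ → ℝ} (hd : Differentiable ℝ F)
    {a b lam mu u v : ℝ} (hlam : 0 < lam)
    (hder : ∀ x ∈ Ioo a b, lam ≤ |deriv F x|)
    (hu : u ∈ Ioo a b) (hv : v ∈ Ioo a b)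
    (hFu : |F u| < mu) (hFv : |F v| < mu) : |u - v| ≤ 2 * mu / lam := by
  have hmu : 0 < mu := lt_of_le_of_lt (abs_nonneg _) hFu
  have key : ∀ p q : ℝ, p ∈ Ioo a b → q ∈ Ioo a b → p < q → |F p| < mu → |F q| < mu →
      q - p ≤ 2 * mu / lam := by
    intro p q hp hq hpq hFp hFq
    obtain ⟨ξ, hξ, hξeq⟩ := exists_deriv_eq_slope F hpq (hd.continuous.continuousOn)
      (hd.differentiableOn)
    have hξab : ξ ∈ Ioo a b := ⟨lt_trans hp.1 hξ.1, lt_trans hξ.2 hq.2⟩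
    have h1 : lam ≤ |F q - F p| / (q - p) := by
      have := hder ξ hξab
      rwa [hξeq, abs_div, abs_of_pos (by linarith : (0:ℝ) < q - p)] at this
    have h2 : |F q - F p| < 2 * mu := by
      calc |F q - F p| ≤ |F q| + |F p| := abs_sub _ _
        _ < 2 * mu := by linarith
    have hqp : 0 < q - p := by linarith
    rw [le_div_iff₀ hqp] at h1
    rw [le_div_iff₀ hlam]
    nlinarith
  rcases lt_trichotomy u v with h | h | h
  · rw [abs_of_neg (by linarith : u - v < 0)]
    have := key u v hu hv h hFu hFv; linarith
  · simp [h]; positivity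
  · rw [abs_of_pos (by linarith : 0 < u - v)]
    have := key v u hv hu h hFv hFu; linarith

lemma meas_sep_Icc_le_Ioo (a b : ℝ) (P : ℝ → Prop) :
    volume {x ∈ Icc a b | P x} ≤ volume {x ∈ Ioo a b | P x} := by
  have hsub : {x ∈ Icc a b | P x} ⊆ {x ∈ Ioo a b | P x} ∪ {a, b} := by
    intro x ⟨hx, hPx⟩
    rcases eq_or_lt_of_le hx.1 with h1 | h1
    · exact Or.inr (Or.inl h1.symm)
    rcases eq_or_lt_of_le hx.2 with h2 | h2
    · exact Or.inr (Or.inr h2)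
    exact Or.inl ⟨⟨h1, h2⟩, hPx⟩
  have hz : volume ({a, b} : Set ℝ) = 0 :=
    Set.Countable.measure_zero (Set.Finite.countable (by simp)) volume
  calc volume {x ∈ Icc a b | P x} ≤ volume ({x ∈ Ioo a b | P x} ∪ {a, b}) := measure_mono hsub
    _ ≤ volume {x ∈ Ioo a b | P x} + volume ({a, b} : Set ℝ) := measure_union_le _ _
    _ = volume {x ∈ Ioo a b | P x} := by rw [hz, add_zero]

lemma sublevel (h : ℝ → ℝ) (hcd : ContDiff ℝ ⊤ h) :
    ∀ (n : ℕ) (a b lam eps : ℝ), 0 < lam → 0 < eps →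
    (∀ x ∈ Ioo a b, lam ≤ |iteratedDeriv (n+1) h x|) →
    volume {x ∈ Ioo a b | |h x| < eps} ≤
      ENNReal.ofReal ((4:ℝ)^(n+2) * (eps/lam) ^ (1/(n+1) : ℝ)) := by
  have hdiff : ∀ m : ℕ, Differentiable ℝ (iteratedDeriv m h) := fun m =>
    hcd.differentiable_iteratedDeriv m (by simp)
  intro n
  induction n with
  | zero =>
    intro a b lam eps hlam heps hder
    simp only [Nat.cast_zero, zero_add, ne_eq, one_ne_zero, not_false_eq_true, div_self]
    rw [Real.rpow_one]
    rcases Set.eq_empty_or_nonempty {x ∈ Ioo a b | |h x| < eps} with hT | ⟨u, hu⟩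
    · rw [hT]; simp
    have hder' : ∀ x ∈ Ioo a b, lam ≤ |deriv h x| := by
      intro x hx; have := hder x hx; rwa [iteratedDeriv_one] at this
    have hsub : {x ∈ Ioo a b | |h x| < eps} ⊆ Icc (u - 2*eps/lam) (u + 2*eps/lam) := by
      intro v hv
      have := diam_small (hcd.differentiable (by simp)) hlam hder' hv.1 hu.1 hv.2 hu.2
      rw [abs_le] at this
      constructor <;> linarith [this.1, this.2]
    calc volume {x ∈ Ioo a b | |h x| < eps} ≤ volume (Icc (u - 2*eps/lam) (u + 2*eps/lam)) :=
          measure_mono hsub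
      _ = ENNReal.ofReal (4 * eps / lam) := by
          rw [Real.volume_Icc]; ring_nf
      _ ≤ ENNReal.ofReal ((4:ℝ)^2 * (eps/lam)) := by
          apply ENNReal.ofReal_le_ofReal
          rw [mul_div_assoc]
          have : (0:ℝ) ≤ eps/lam := by positivity
          nlinarith
  | succ n ih =>
    intro a b lam eps hlam heps hder
    set t : ℝ := eps / lam with ht_def
    have ht : 0 < t := by positivity
    set e : ℝ := 1/(n+2 : ℝ) with he_def
    have hn2 : (0:ℝ) < (n:ℝ) + 2 := by positivity
    have he : 0 < e := by positivity
    set mu : ℝ := lam * t ^ e with hmu_def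
    have hte : 0 < t ^ e := Real.rpow_pos_of_pos ht e
    have hmu : 0 < mu := by positivity
    -- key rpow identity : (eps/mu) ^ (1/(n+1)) = t ^ e
    have hepsmu : eps / mu = t ^ (1 - e) := by
      rw [hmu_def, Real.rpow_sub ht, Real.rpow_one]
      field_simp [ht_def]
      rw [ht_def]; field_simp
    have hkey : (eps/mu) ^ (1/(n+1:ℝ)) = t ^ e := by
      rw [hepsmu, ← Real.rpow_mul (le_of_lt ht)]
      congr 1
      have h1 : (n:ℝ) + 1 ≠ 0 := by positivity
      field_simp [he_def]
      rw [he_def]; field_simp; ring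
    have hcast : (1 / ((↑(n+1):ℝ) + 1)) = e := by push_cast [he_def]; ring
    rw [hcast]
    set S : Set ℝ := {x ∈ Ioo a b | |iteratedDeriv (n+1) h x| < mu} with hS_def
    have hFd : Differentiable ℝ (iteratedDeriv (n+1) h) := hdiff (n+1)
    have hderF : ∀ x ∈ Ioo a b, lam ≤ |deriv (iteratedDeriv (n+1) h) x| := by
      intro x hx; rw [← iteratedDeriv_succ]; exact hder x hx
    have h4le : (4:ℝ) ≤ 4^(n+2) := by
      calc (4:ℝ) = 4^1 := (pow_one 4).symm
      _ ≤ 4^(n+2) := pow_le_pow_right₀ (by norm_num) (by omega)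
    rcases Set.eq_empty_or_nonempty S with hSe | ⟨u, hu⟩
    · have hmub : ∀ x ∈ Ioo a b, mu ≤ |iteratedDeriv (n+1) h x| := by
        intro x hx
        by_contra hc
        exact (Set.eq_empty_iff_forall_notMem.mp hSe x) ⟨hx, lt_of_not_ge hc⟩
      calc volume {x ∈ Ioo a b | |h x| < eps}
          ≤ ENNReal.ofReal ((4:ℝ)^(n+2) * (eps/mu) ^ (1/(n+1:ℝ))) := ih a b mu eps hmu heps hmub
        _ ≤ ENNReal.ofReal ((4:ℝ)^(n+1+2) * t ^ e) := by
            apply ENNReal.ofReal_le_ofReal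
            rw [hkey]
            have : (4:ℝ)^(n+2) ≤ 4^(n+1+2) := pow_le_pow_right₀ (by norm_num) (by omega)
            nlinarith [hte.le]
    · -- main case: S nonempty
      set d : ℝ := 2 * mu / lam with hd_def
      have hd : 0 < d := by positivity
      have hub : u ∈ Ioo a b := hu.1
      have hcover : {x ∈ Ioo a b | |h x| < eps} ⊆
          (Icc (u-d) (u+d) ∪ {x ∈ Ioo a (u-d) | |h x| < eps}) ∪
            {x ∈ Ioo (u+d) b | |h x| < eps} := by
        intro x hx
        rcases le_or_gt x (u-d) with h1 | h1
        · rcases eq_or_lt_of_le h1 with h1' | h1'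
          · exact Or.inl (Or.inl ⟨by rw [h1'], by rw [h1']; linarith⟩)
          · exact Or.inl (Or.inr ⟨⟨hx.1.1, h1'⟩, hx.2⟩)
        rcases le_or_gt x (u+d) with h2 | h2
        · exact Or.inl (Or.inl ⟨le_of_lt h1, h2⟩)
        · exact Or.inr ⟨⟨h2, hx.1.2⟩, hx.2⟩
      have hL : ∀ x ∈ Ioo a (u-d), mu ≤ |iteratedDeriv (n+1) h x| := by
        intro x hx
        have hxab : x ∈ Ioo a b := ⟨hx.1, by have := hx.2; have := hub.2; linarith⟩
        by_contra hc
        have := diam_small hFd hlam hderF hxab hub (lt_of_not_ge hc) hu.2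
        rw [abs_le] at this
        have := this.1
        have hx2 := hx.2
        simp only [hd_def] at hx2 this
        linarith
      have hR : ∀ x ∈ Ioo (u+d) b, mu ≤ |iteratedDeriv (n+1) h x| := by
        intro x hx
        have hxab : x ∈ Ioo a b := ⟨by have := hx.1; have := hub.1; linarith, hx.2⟩
        by_contra hc
        have := diam_small hFd hlam hderF hxab hub (lt_of_not_ge hc) hu.2
        rw [abs_le] at this
        have := this.2
        have hx1 := hx.1
        simp only [hd_def] at hx1 this
        linarith
      have hIL := ih a (u-d) mu eps hmu heps hL
      have hIR := ih (u+d) b mu eps hmu heps hR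
      rw [hkey] at hIL hIR
      have hIcc : volume (Icc (u-d) (u+d)) = ENNReal.ofReal (2*d) := by
        rw [Real.volume_Icc]; ring_nf
      calc volume {x ∈ Ioo a b | |h x| < eps}
          ≤ volume ((Icc (u-d) (u+d) ∪ {x ∈ Ioo a (u-d) | |h x| < eps}) ∪
            {x ∈ Ioo (u+d) b | |h x| < eps}) := measure_mono hcover
        _ ≤ (volume (Icc (u-d) (u+d)) + volume {x ∈ Ioo a (u-d) | |h x| < eps})
              + volume {x ∈ Ioo (u+d) b | |h x| < eps} :=
            le_trans (measure_union_le _ _) (by gcongr; exact measure_union_le _ _)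
        _ ≤ (ENNReal.ofReal (2*d) + ENNReal.ofReal ((4:ℝ)^(n+2) * t^e))
              + ENNReal.ofReal ((4:ℝ)^(n+2) * t^e) := by
            rw [hIcc]; gcongr
        _ ≤ ENNReal.ofReal ((4:ℝ)^(n+1+2) * t ^ e) := by
            rw [← ENNReal.ofReal_add (by positivity) (by positivity),
              ← ENNReal.ofReal_add (by positivity) (by positivity)]
            apply ENNReal.ofReal_le_ofReal
            have hdt : 2*d = 4 * t^e := by
              rw [hd_def, hmu_def]; field_simp; ring
            rw [hdt]
            have h43 : (4:ℝ)^(n+1+2) = 4 * 4^(n+2) := by ring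
            nlinarith [hte.le]


lemma iter_lin (f g : ℝ → ℝ) (hf : ContDiff ℝ ⊤ f) (hg : ContDiff ℝ ⊤ g) (a b : ℝ) :
    ∀ k : ℕ, iteratedDeriv k (fun x => a * g x - b * f x) =
      fun x => a * iteratedDeriv k g x - b * iteratedDeriv k f x := by
  intro k
  induction k with
  | zero => simp [iteratedDeriv_zero]
  | succ k ih =>
    rw [iteratedDeriv_succ, ih, iteratedDeriv_succ, iteratedDeriv_succ]
    funext x
    have hdf : DifferentiableAt ℝ (iteratedDeriv k f) x :=
      (hf.differentiable_iteratedDeriv k (by simp)).differentiableAt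
    have hdg : DifferentiableAt ℝ (iteratedDeriv k g) x :=
      (hg.differentiable_iteratedDeriv k (by simp)).differentiableAt
    rw [deriv_fun_sub (hdg.const_mul a) (hdf.const_mul b), deriv_const_mul a hdg,
      deriv_const_mul b hdf]

lemma zero_of_derivs (w : ℝ → ℝ) (hw : AnalyticOnNhd ℝ w univ) (x : ℝ)
    (h : ∀ k, iteratedDeriv k w x = 0) : ∀ y, w y = 0 := by
  obtain ⟨p, hp⟩ := hw x (mem_univ x)
  have hp0 : p = 0 := by
    funext k
    obtain ⟨r, hr⟩ := hp
    have h1 := hr.factorial_smul (1:ℝ) k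
    rw [← iteratedDeriv_eq_iteratedFDeriv, h k] at h1
    have h2 : p k (fun _ => (1:ℝ)) = 0 := by
      rcases smul_eq_zero.mp h1 with hc | hc
      · exact absurd hc (Nat.factorial_ne_zero k)
      · exact hc
    have hc : p.coeff k = 0 := h2
    exact FormalMultilinearSeries.coeff_eq_zero.mp hc
  rw [hp0] at hp
  have hev := hp.eventually_eq_zero
  have := hw.eqOn_zero_of_preconnected_of_eventuallyEq_zero isPreconnected_univ
    (mem_univ x) hev
  intro y
  exact this (mem_univ y)

lemma claimA (f g : ℝ → ℝ)
    (hfan : AnalyticOnNhd ℝ f univ) (hgan : AnalyticOnNhd ℝ g univ)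
    (hvnc : ∃ x y : ℝ, f x ≠ 0 ∧ f y ≠ 0 ∧ g x / f x ≠ g y / f y) :
    ∃ (n : ℕ) (c : ℝ), 0 < c ∧ ∀ p : ℝ × ℝ, ‖p‖ = 1 → ∀ x ∈ Icc (0:ℝ) 1,
      ∃ k ≤ n, c ≤ |p.1 * iteratedDeriv k g x - p.2 * iteratedDeriv k f x| := by
  have hfc : ContDiff ℝ ⊤ f := hfan.contDiff
  have hgc : ContDiff ℝ ⊤ g := hgan.contDiff
  set F : ℕ → (ℝ × ℝ) × ℝ → ℝ :=
    fun k q => q.1.1 * iteratedDeriv k g q.2 - q.1.2 * iteratedDeriv k f q.2 with hF_def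
  have contF : ∀ k, Continuous (F k) := by
    intro k
    apply Continuous.sub
    · exact (continuous_fst.fst).mul ((hgc.continuous_iteratedDeriv k le_top).comp continuous_snd)
    · exact (continuous_fst.snd).mul ((hfc.continuous_iteratedDeriv k le_top).comp continuous_snd)
  set K : Set ((ℝ × ℝ) × ℝ) := Metric.sphere 0 1 ×ˢ Icc (0:ℝ) 1 with hK_def
  have hK : IsCompact K := (isCompact_sphere 0 1).prod isCompact_Icc
  have hnz : ∀ q ∈ K, ∃ k, F k q ≠ 0 := by
    intro q hq
    by_contra hc
    push_neg at hc
    set w : ℝ → ℝ := fun t => q.1.1 * g t - q.1.2 * f t with hw_def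
    have hwan : AnalyticOnNhd ℝ w univ := by
      have h1 : AnalyticOnNhd ℝ (fun t => q.1.1 * g t) univ := analyticOnNhd_const.mul hgan
      have h2 : AnalyticOnNhd ℝ (fun t => q.1.2 * f t) univ := analyticOnNhd_const.mul hfan
      exact h1.sub h2
    have hall : ∀ k, iteratedDeriv k w q.2 = 0 := by
      intro k
      have := congrFun (iter_lin f g hfc hgc q.1.1 q.1.2 k) q.2
      rw [hw_def]
      rw [this]
      exact hc k
    have hw0 : ∀ y, w y = 0 := zero_of_derivs w hwan q.2 hall
    have hq1 : ‖q.1‖ = 1 := mem_sphere_zero_iff_norm.mp hq.1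
    obtain ⟨x, y, hx, hy, hne⟩ := hvnc
    rcases eq_or_ne q.1.1 0 with h11 | h11
    · have h12 : q.1.2 ≠ 0 := by
        intro h12
        rw [Prod.norm_def, h11, h12] at hq1
        simp at hq1
      have : ∀ t, f t = 0 := by
        intro t
        have := hw0 t
        rw [hw_def] at this
        simp only [h11, zero_mul, zero_sub, neg_eq_zero] at this
        exact (mul_eq_zero.mp this).resolve_left h12
      exact hx (this x)
    · have hgx : g x * q.1.1 = q.1.2 * f x := by have := hw0 x; simp only [hw_def] at this; nlinarith [this]
      have hgy : g y * q.1.1 = q.1.2 * f y := by have := hw0 y; simp only [hw_def] at this; nlinarith [this]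
      apply hne
      rw [div_eq_div_iff hx hy]
      have e1 : g x * q.1.1 * f y = q.1.2 * f x * f y := by rw [hgx]
      have e2 : g y * q.1.1 * f x = q.1.2 * f y * f x := by rw [hgy]
      have : (g x * f y) * q.1.1 = (g y * f x) * q.1.1 := by nlinarith [e1, e2]
      exact mul_right_cancel₀ h11 this
  -- finite subcover
  have hUopen : ∀ k, IsOpen {q | F k q ≠ 0} := fun k =>
    (isOpen_compl_singleton).preimage (contF k)
  have hcov : K ⊆ ⋃ k, {q | F k q ≠ 0} := by
    intro q hq
    obtain ⟨k, hk⟩ := hnz q hq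
    exact mem_iUnion.mpr ⟨k, hk⟩
  obtain ⟨t, ht⟩ := hK.elim_finite_subcover _ hUopen hcov
  set n : ℕ := t.sup id with hn_def
  have hnle : ∀ q ∈ K, ∃ k ≤ n, F k q ≠ 0 := by
    intro q hq
    obtain ⟨k, hkt, hk⟩ := mem_iUnion₂.mp (ht hq)
    exact ⟨k, Finset.le_sup (f := id) hkt, hk⟩
  -- minimum of the sum
  set M : (ℝ × ℝ) × ℝ → ℝ := fun q => ∑ k ∈ Finset.range (n+1), |F k q| with hM_def
  have contM : Continuous M := continuous_finset_sum _ fun k _ => (contF k).abs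
  have hq0 : (((1:ℝ),(0:ℝ)), (0:ℝ)) ∈ K := by
    constructor
    · rw [mem_sphere_zero_iff_norm, Prod.norm_def]
      simp
    · simp [mem_Icc]
  obtain ⟨qm, hqmK, hqmin⟩ := hK.exists_isMinOn ⟨_, hq0⟩ contM.continuousOn
  have hc0 : 0 < M qm := by
    obtain ⟨k, hkn, hk⟩ := hnle qm hqmK
    apply Finset.sum_pos'
    · intro i _; exact abs_nonneg _
    · exact ⟨k, Finset.mem_range.mpr (by omega), abs_pos.mpr hk⟩
  refine ⟨n, M qm / (n+1), by positivity, ?_⟩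
  intro p hp x hx
  have hqK : ((p, x) : (ℝ × ℝ) × ℝ) ∈ K := ⟨mem_sphere_zero_iff_norm.mpr hp, hx⟩
  have hMq : M qm ≤ M (p, x) := hqmin hqK
  by_contra hcon
  push_neg at hcon
  have hsum : M (p, x) < M qm := by
    have hlt : ∀ k ∈ Finset.range (n+1), |F k (p, x)| < M qm / (n+1) := by
      intro k hk
      exact hcon k (by have := Finset.mem_range.mp hk; omega)
    calc M (p, x) < ∑ _k ∈ Finset.range (n+1), M qm / (n+1) :=
          Finset.sum_lt_sum_of_nonempty (by simp) hlt
      _ = M qm := by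
          rw [Finset.sum_const, Finset.card_range, nsmul_eq_mul]
          field_simp
          norm_num
  linarith


lemma unif_single (u : ℝ → ℝ) (hu : Continuous u) {c : ℝ} (hc : 0 < c) :
    ∃ δ > 0, ∀ x ∈ Icc (-1:ℝ) 2, ∀ y ∈ Icc (-1:ℝ) 2, |x - y| ≤ δ → |u x - u y| ≤ c := by
  have huc := isCompact_Icc (a := (-1:ℝ)) (b := 2) |>.uniformContinuousOn_of_continuous
    hu.continuousOn
  rw [Metric.uniformContinuousOn_iff_le] at huc
  obtain ⟨δ, hδ, h⟩ := huc c hc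
  refine ⟨δ/2, by positivity, fun x hx y hy hxy => ?_⟩
  have := h x hx y hy (by rw [Real.dist_eq]; linarith)
  rwa [Real.dist_eq] at this

lemma unif_delta (f g : ℝ → ℝ) (hfc : ContDiff ℝ ⊤ f) (hgc : ContDiff ℝ ⊤ g) {c : ℝ}
    (hc : 0 < c) : ∀ m : ℕ, ∃ δ > 0, ∀ k ≤ m, ∀ x ∈ Icc (-1:ℝ) 2, ∀ y ∈ Icc (-1:ℝ) 2,
      |x - y| ≤ δ → |iteratedDeriv k g x - iteratedDeriv k g y| ≤ c ∧
      |iteratedDeriv k f x - iteratedDeriv k f y| ≤ c := by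
  intro m
  induction m with
  | zero =>
    obtain ⟨δ1, hδ1, h1⟩ := unif_single (iteratedDeriv 0 g)
      (hgc.continuous_iteratedDeriv 0 le_top) hc
    obtain ⟨δ2, hδ2, h2⟩ := unif_single (iteratedDeriv 0 f)
      (hfc.continuous_iteratedDeriv 0 le_top) hc
    refine ⟨min δ1 δ2, lt_min hδ1 hδ2, fun k hk x hx y hy hxy => ?_⟩
    interval_cases k
    exact ⟨h1 x hx y hy (le_trans hxy (min_le_left _ _)),
      h2 x hx y hy (le_trans hxy (min_le_right _ _))⟩
  | succ m ih =>
    obtain ⟨δ0, hδ0, h0⟩ := ih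
    obtain ⟨δ1, hδ1, h1⟩ := unif_single (iteratedDeriv (m+1) g)
      (hgc.continuous_iteratedDeriv (m+1) le_top) hc
    obtain ⟨δ2, hδ2, h2⟩ := unif_single (iteratedDeriv (m+1) f)
      (hfc.continuous_iteratedDeriv (m+1) le_top) hc
    refine ⟨min δ0 (min δ1 δ2), by positivity, fun k hk x hx y hy hxy => ?_⟩
    rcases Nat.lt_or_ge k (m+1) with h | h
    · exact h0 k (by omega) x hx y hy (le_trans hxy (min_le_left _ _))
    · have hk1 : k = m + 1 := by omega
      subst hk1
      exact ⟨h1 x hx y hy (le_trans hxy (le_trans (min_le_right _ _) (min_le_left _ _))),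
        h2 x hx y hy (le_trans hxy (le_trans (min_le_right _ _) (min_le_right _ _)))⟩

/-- **Łojasiewicz inequality for `g - E·f`.**
Let `f, g` be real analytic on `𝕋 = ℝ/ℤ` (encoded as `1`-periodic real analytic functions on
`ℝ`) with `f` and `v = g/f` nonconstant and `Z(f) = {x ∈ 𝕋 : f(x) = 0} ≠ ∅`.  There is
`c = c(f,g) > 0` such that `mes {x ∈ 𝕋 : |g x - E·f x| < ε} < ε ^ c` for all `E ∈ ℝ` and all
sufficiently small `ε > 0`. -/
theorem statement4 (f g : ℝ → ℝ)
    (hfper : Function.Periodic f 1) (hgper : Function.Periodic g 1)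
    (hfan : AnalyticOnNhd ℝ f Set.univ) (hgan : AnalyticOnNhd ℝ g Set.univ)
    (hfnc : ∃ x y : ℝ, f x ≠ f y)
    (hvnc : ∃ x y : ℝ, f x ≠ 0 ∧ f y ≠ 0 ∧ g x / f x ≠ g y / f y)
    (hZ : ∃ x : ℝ, f x = 0) :
    ∃ c > (0 : ℝ), ∃ ε₁ > (0 : ℝ), ∀ E : ℝ, ∀ ε : ℝ, 0 < ε → ε < ε₁ →
      volume {x ∈ Ico (0 : ℝ) 1 | |g x - E * f x| < ε} < ENNReal.ofReal (ε ^ c) := by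
  have hfc : ContDiff ℝ ⊤ f := hfan.contDiff
  have hgc : ContDiff ℝ ⊤ g := hgan.contDiff
  obtain ⟨n, c, hc, hA⟩ := claimA f g hfan hgan hvnc
  obtain ⟨δ, hδ, hUC⟩ := unif_delta f g hfc hgc (show (0:ℝ) < c/8 by positivity) n
  set N : ℕ := ⌈1/δ⌉₊ with hN_def
  have hN : 0 < N := Nat.ceil_pos.mpr (by positivity)
  have hNR : (0:ℝ) < N := by exact_mod_cast hN
  have hNδ : 1/(N:ℝ) ≤ δ := by
    rw [div_le_iff₀ hNR]
    have h1 : 1/δ ≤ (N:ℝ) := Nat.le_ceil _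
    rw [div_le_iff₀ hδ] at h1
    linarith
  set η : ℝ := 1/(n+1:ℝ) with hη_def
  have hη : 0 < η := by positivity
  have hη1 : η ≤ 1 := by
    rw [hη_def, div_le_one (by positivity)]
    have : (0:ℝ) ≤ n := Nat.cast_nonneg n
    linarith
  set K' : ℝ := (N:ℝ) * ((4:ℝ)^(n+2) * (2/c) ^ η) with hK'_def
  have hK' : 0 < K' := by
    apply mul_pos hNR
    apply mul_pos (by positivity)
    exact Real.rpow_pos_of_pos (by positivity) η
  set ε₀ : ℝ := (1/(2*K')) ^ (2/η) with hε₀_def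
  have hε₀ : 0 < ε₀ := Real.rpow_pos_of_pos (by positivity) _
  refine ⟨η/2, by positivity, min (c/2) (min 1 ε₀), by positivity, ?_⟩
  intro E ε hε hεlt
  have hεc2 : ε < c/2 := lt_of_lt_of_le hεlt (min_le_left _ _)
  have hε1 : ε < 1 := lt_of_lt_of_le hεlt (le_trans (min_le_right _ _) (min_le_left _ _))
  have hεε₀ : ε < ε₀ := lt_of_lt_of_le hεlt (le_trans (min_le_right _ _) (min_le_right _ _))
  -- the function h and its derivatives
  set s : ℝ := max 1 |E| with hs_def
  have hs1 : (1:ℝ) ≤ s := le_max_left _ _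
  have hs : (0:ℝ) < s := lt_of_lt_of_le one_pos hs1
  have hEs : |E| ≤ s := le_max_right _ _
  set p : ℝ × ℝ := (1/s, E/s) with hp_def
  have hpnorm : ‖p‖ = 1 := by
    rw [Prod.norm_def]
    show max ‖(1:ℝ)/s‖ ‖E/s‖ = 1
    rw [Real.norm_eq_abs, Real.norm_eq_abs, abs_div, abs_div, abs_of_pos hs,
      abs_of_pos one_pos, max_div_div_right hs.le]
    rw [← hs_def, div_self (ne_of_gt hs)]
  have hhan : AnalyticOnNhd ℝ (fun x => g x - E * f x) univ :=
    hgan.sub (analyticOnNhd_const.mul hfan)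
  have hhc : ContDiff ℝ ⊤ (fun x => g x - E * f x) := hhan.contDiff
  have hiter : ∀ (k : ℕ) (x : ℝ), iteratedDeriv k (fun x => g x - E * f x) x =
      iteratedDeriv k g x - E * iteratedDeriv k f x := by
    intro k x
    have heq : (fun x => g x - E * f x) = (fun x => 1 * g x - E * f x) := by
      funext t; ring
    rw [heq, iter_lin f g hfc hgc 1 E k]
    simp
  -- per-piece bound
  have hpiece : ∀ a : ℝ, a ∈ Icc (0:ℝ) 1 →
      volume {x ∈ Ioo a (a + 1/(N:ℝ)) | |g x - E * f x| < ε} ≤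
        ENNReal.ofReal ((4:ℝ)^(n+2) * (2*ε/c) ^ η) := by
    intro a ha
    obtain ⟨k, hkn, hk⟩ := hA p hpnorm a ha
    have hBnn : (0:ℝ) ≤ (4:ℝ)^(n+2) * (2*ε/c) ^ η := by positivity
    have hlow : ∀ y ∈ Ioo a (a + 1/(N:ℝ)),
        c/2 ≤ |iteratedDeriv k (fun x => g x - E * f x) y| := by
      intro y hy
      have haI : a ∈ Icc (-1:ℝ) 2 := ⟨by linarith [ha.1], by linarith [ha.2]⟩
      have hyI : y ∈ Icc (-1:ℝ) 2 := by
        constructor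
        · linarith [hy.1, ha.1]
        · have h1N : 1/(N:ℝ) ≤ 1 := by
            rw [div_le_one hNR]; exact_mod_cast hN
          linarith [hy.2, ha.2]
      have hay : |a - y| ≤ δ := by
        rw [abs_sub_comm, abs_of_pos (by linarith [hy.1] : 0 < y - a)]
        have := hy.2
        linarith
      obtain ⟨hUg, hUf⟩ := hUC k hkn a haI y hyI hay
      -- combination bound
      have hp1 : |p.1| ≤ 1 := by
        rw [hp_def]
        show |1/s| ≤ 1
        rw [abs_div, abs_of_pos one_pos, abs_of_pos hs, div_le_one hs]
        exact hs1
      have hp2 : |p.2| ≤ 1 := by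
        rw [hp_def]
        show |E/s| ≤ 1
        rw [abs_div, abs_of_pos hs, div_le_one hs]
        exact hEs
      have hdiff : |(p.1 * iteratedDeriv k g y - p.2 * iteratedDeriv k f y) -
          (p.1 * iteratedDeriv k g a - p.2 * iteratedDeriv k f a)| ≤ c/4 := by
        have e1 : (p.1 * iteratedDeriv k g y - p.2 * iteratedDeriv k f y) -
            (p.1 * iteratedDeriv k g a - p.2 * iteratedDeriv k f a) =
            p.1 * (iteratedDeriv k g y - iteratedDeriv k g a)
              - p.2 * (iteratedDeriv k f y - iteratedDeriv k f a) := by ring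
        rw [e1]
        calc |p.1 * (iteratedDeriv k g y - iteratedDeriv k g a)
              - p.2 * (iteratedDeriv k f y - iteratedDeriv k f a)|
            ≤ |p.1 * (iteratedDeriv k g y - iteratedDeriv k g a)| +
              |p.2 * (iteratedDeriv k f y - iteratedDeriv k f a)| := abs_sub _ _
          _ = |p.1| * |iteratedDeriv k g y - iteratedDeriv k g a| +
              |p.2| * |iteratedDeriv k f y - iteratedDeriv k f a| := by
                rw [abs_mul, abs_mul]
          _ ≤ 1 * (c/8) + 1 * (c/8) := by
              apply add_le_add
              · exact mul_le_mul hp1 (by rw [abs_sub_comm]; exact hUg) (abs_nonneg _) one_pos.le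
              · exact mul_le_mul hp2 (by rw [abs_sub_comm]; exact hUf) (abs_nonneg _) one_pos.le
          _ = c/4 := by ring
      have hcomb : 3*c/4 ≤ |p.1 * iteratedDeriv k g y - p.2 * iteratedDeriv k f y| := by
        have := abs_sub_abs_le_abs_sub (p.1 * iteratedDeriv k g a - p.2 * iteratedDeriv k f a)
          ((p.1 * iteratedDeriv k g a - p.2 * iteratedDeriv k f a) -
            ((p.1 * iteratedDeriv k g y - p.2 * iteratedDeriv k f y) -
              (p.1 * iteratedDeriv k g a - p.2 * iteratedDeriv k f a)) + 0)
        -- simpler direct approach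
        have h1 : |p.1 * iteratedDeriv k g y - p.2 * iteratedDeriv k f y| ≥
            |p.1 * iteratedDeriv k g a - p.2 * iteratedDeriv k f a| - c/4 := by
          have htri := abs_sub_abs_le_abs_sub
            (p.1 * iteratedDeriv k g a - p.2 * iteratedDeriv k f a)
            (p.1 * iteratedDeriv k g y - p.2 * iteratedDeriv k f y)
          rw [abs_sub_comm] at hdiff
          linarith
        linarith
      -- scale by s
      have hscale : iteratedDeriv k (fun x => g x - E * f x) y =
          s * (p.1 * iteratedDeriv k g y - p.2 * iteratedDeriv k f y) := by
        rw [hiter k y, hp_def]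
        show _ = s * (1/s * _ - E/s * _)
        field_simp
      rw [hscale, abs_mul, abs_of_pos hs]
      calc c/2 ≤ 3*c/4 := by linarith
        _ = 1 * (3*c/4) := (one_mul _).symm
        _ ≤ s * |p.1 * iteratedDeriv k g y - p.2 * iteratedDeriv k f y| := by
            apply mul_le_mul hs1 hcomb (by positivity) hs.le
    rcases Nat.eq_zero_or_pos k with hk0 | hk1
    · -- empty set
      have : {x ∈ Ioo a (a + 1/(N:ℝ)) | |g x - E * f x| < ε} = ∅ := by
        rw [Set.eq_empty_iff_forall_notMem]
        rintro x ⟨hx, hxlt⟩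
        have := hlow x hx
        rw [hk0, iteratedDeriv_zero] at this
        have h2 : c/2 ≤ |g x - E * f x| := this
        linarith
      rw [this]
      simp [hBnn]
    · -- sublevel
      obtain ⟨m, rfl⟩ : ∃ m, k = m + 1 := ⟨k - 1, by omega⟩
      have hsl := sublevel (fun x => g x - E * f x) hhc m a (a + 1/(N:ℝ)) (c/2) ε
        (by positivity) hε hlow
      refine le_trans hsl (ENNReal.ofReal_le_ofReal ?_)
      have hbase : ε / (c/2) = 2*ε/c := by field_simp
      rw [hbase]
      have hb1 : 2*ε/c ≤ 1 := by
        rw [div_le_one hc]; linarith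
      have hb0 : 0 < 2*ε/c := by positivity
      have hexp : η ≤ 1/(m+1:ℝ) := by
        rw [hη_def]
        apply div_le_div_of_nonneg_left one_pos.le (by positivity)
        have : (m:ℝ) ≤ n := by exact_mod_cast (by omega : m ≤ n)
        linarith
      have hrp : (2*ε/c) ^ (1/(m+1:ℝ)) ≤ (2*ε/c) ^ η :=
        Real.rpow_le_rpow_of_exponent_ge hb0 hb1 hexp
      have hpow : (4:ℝ)^(m+2) ≤ (4:ℝ)^(n+2) :=
        pow_le_pow_right₀ (by norm_num) (by omega)
      have h1 : (0:ℝ) ≤ (2*ε/c) ^ (1/(m+1:ℝ)) := (Real.rpow_pos_of_pos hb0 _).le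
      calc (4:ℝ)^(m+2) * (2*ε/c) ^ (1/(m+1:ℝ)) ≤ (4:ℝ)^(n+2) * (2*ε/c) ^ (1/(m+1:ℝ)) := by
            apply mul_le_mul_of_nonneg_right hpow h1
        _ ≤ (4:ℝ)^(n+2) * (2*ε/c) ^ η := by
            apply mul_le_mul_of_nonneg_left hrp (by positivity)
  -- cover
  have hcover : {x ∈ Ico (0:ℝ) 1 | |g x - E * f x| < ε} ⊆
      ⋃ j ∈ Finset.range N, {x ∈ Icc ((j:ℝ)/N) ((j:ℝ)/N + 1/N) | |g x - E * f x| < ε} := by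
    intro x hx
    have hx0 : (0:ℝ) ≤ x := hx.1.1
    have hx1 : x < 1 := hx.1.2
    set j : ℕ := ⌊x * N⌋₊ with hj_def
    have hxN : 0 ≤ x * N := by positivity
    have hjlt : j < N := by
      rw [hj_def, Nat.floor_lt hxN]
      calc x * N < 1 * N := by apply mul_lt_mul_of_pos_right hx1 hNR
        _ = N := one_mul _
    apply mem_biUnion (Finset.mem_range.mpr hjlt)
    refine ⟨⟨?_, ?_⟩, hx.2⟩
    · rw [div_le_iff₀ hNR]
      calc ((j:ℝ)) ≤ x * N := Nat.floor_le hxN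
        _ = x * N := rfl
    · rw [← add_div, le_div_iff₀ hNR]
      have := Nat.lt_floor_add_one (x * N)
      push_cast
      linarith
  have hsum : volume {x ∈ Ico (0:ℝ) 1 | |g x - E * f x| < ε} ≤
      ENNReal.ofReal (K' * ε ^ η) := by
    calc volume {x ∈ Ico (0:ℝ) 1 | |g x - E * f x| < ε}
        ≤ volume (⋃ j ∈ Finset.range N,
            {x ∈ Icc ((j:ℝ)/N) ((j:ℝ)/N + 1/N) | |g x - E * f x| < ε}) := measure_mono hcover
      _ ≤ ∑ j ∈ Finset.range N,
            volume {x ∈ Icc ((j:ℝ)/N) ((j:ℝ)/N + 1/N) | |g x - E * f x| < ε} :=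
          measure_biUnion_finset_le _ _
      _ ≤ ∑ _j ∈ Finset.range N, ENNReal.ofReal ((4:ℝ)^(n+2) * (2*ε/c) ^ η) := by
          apply Finset.sum_le_sum
          intro j hj
          have hjN : ((j:ℝ)/N) ∈ Icc (0:ℝ) 1 := ⟨by positivity, by
            rw [div_le_one hNR]
            exact_mod_cast le_of_lt (Finset.mem_range.mp hj)⟩
          exact le_trans (meas_sep_Icc_le_Ioo _ _ _) (hpiece _ hjN)
      _ = (N : ENNReal) * ENNReal.ofReal ((4:ℝ)^(n+2) * (2*ε/c) ^ η) := by
          rw [Finset.sum_const, Finset.card_range, nsmul_eq_mul]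
      _ = ENNReal.ofReal (K' * ε ^ η) := by
          rw [← ENNReal.ofReal_natCast N, ← ENNReal.ofReal_mul (Nat.cast_nonneg N)]
          congr 1
          have hsplit2 : (2*ε/c) ^ η = (2/c)^η * ε^η := by
            rw [← Real.mul_rpow (by positivity) hε.le]
            congr 1
            field_simp
          rw [hsplit2, hK'_def]
          ring
  have hεη2 : 0 < ε ^ (η/2) := Real.rpow_pos_of_pos hε _
  have hnum : K' * ε ^ η < ε ^ (η/2) := by
    have hsplit : ε ^ η = ε ^ (η/2) * ε ^ (η/2) := by
      rw [← Real.rpow_add hε]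
      congr 1
      ring
    have hmono : ε ^ (η/2) < ε₀ ^ (η/2) := Real.rpow_lt_rpow hε.le hεε₀ (by positivity)
    have hε₀half : ε₀ ^ (η/2) = 1/(2*K') := by
      rw [hε₀_def, ← Real.rpow_mul (by positivity : (0:ℝ) ≤ 1/(2*K'))]
      have h1 : (2/η) * (η/2) = 1 := by field_simp
      rw [h1, Real.rpow_one]
    have hKe : K' * ε ^ (η/2) < 1/2 := by
      have h2 := mul_lt_mul_of_pos_left (hmono.trans_eq hε₀half) hK'
      have h3 : K' * (1/(2*K')) = 1/2 := by field_simp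
      linarith
    calc K' * ε ^ η = (K' * ε ^ (η/2)) * ε ^ (η/2) := by rw [hsplit]; ring
      _ < (1/2) * ε ^ (η/2) := by apply mul_lt_mul_of_pos_right hKe hεη2
      _ < ε ^ (η/2) := by linarith
  exact lt_of_le_of_lt hsum ((ENNReal.ofReal_lt_ofReal_iff hεη2).mpr hnum)
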